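/- Let H be a (possibly infinite) hypergraph, m, b ≥ 1 integers, λ = (b+1)^{−1/m}, and σ₀ an initial game configuration on H with total danger w_λ(σ₀) = Σ_{S∈E(H), S∩B_{σ₀}=∅} λ^{|S∩U_{σ₀}|} < 1/(b+1). Then Breaker has a strategy for the (m,b) Maker-Breaker game on H starting from σ₀ (Maker claims m unclaimed vertices per turn, then Breaker claims b) which guarantees that Maker never fully claims a hyperedge S ∈ E(H). In particular, if H is finite, Breaker wins the game. -/
import Mathlib


open scoped Classical

inductive Mark : Type
  | U | M | B
deriving DecidableEq

noncomputable def wS {V : Type*} (lam : ℝ) (σ : V → Mark) (S : Finset V) : ℝ :=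
  if ∀ v ∈ S, σ v ≠ Mark.B then lam ^ (S.filter fun v => σ v = Mark.U).card else 0

noncomputable def totalW {V : Type*} (lam : ℝ) (E : Set (Finset V)) (σ : V → Mark) : ℝ :=
  ∑' S : E, wS lam σ S.1

/-- Claim every element of `A` for the player `c`, leaving other elements unchanged. -/
noncomputable def claimSet {V : Type*} (σ : V → Mark) (A : Finset V) (c : Mark) : V → Mark :=
  fun v => if v ∈ A then c else σ v

/-- A strategy for Breaker in a game where he claims at most `b` unclaimed elements per
turn: as a function of the current configuration it produces his set of claims. -/
structure BStrategy (V : Type*) (b : ℕ) where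
  move : (V → Mark) → Finset V
  sub : ∀ σ : V → Mark, ↑(move σ) ⊆ {v | σ v = Mark.U}
  card_le : ∀ σ : V → Mark, (move σ).card ≤ b

/-- `σ, A` is a play of the Maker-Breaker game starting from `σ0` in which Breaker
follows the strategy `str` and Maker claims at most `mk k` unclaimed elements on turn
`k`: `σ k` is the configuration at the start of round `k`, `A k` is the set claimed by
Maker in round `k`, after which Breaker claims the set given by his strategy. -/
def IsPlay {V : Type*} (mk : ℕ → ℕ) (b : ℕ) (str : BStrategy V b) (σ0 : V → Mark)
    (σ : ℕ → V → Mark) (A : ℕ → Finset V) : Prop :=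
  σ 0 = σ0 ∧
  (∀ k, ↑(A k) ⊆ {v | σ k v = Mark.U}) ∧
  (∀ k, (A k).card ≤ mk k) ∧
  (∀ k, σ (k + 1) =
    claimSet (claimSet (σ k) (A k) Mark.M)
      (str.move (claimSet (σ k) (A k) Mark.M)) Mark.B)

namespace Beck

variable {V : Type*}

noncomputable def Dv (lam : ℝ) (E : Set (Finset V)) (σ : V → Mark) (x : V) : ℝ :=
  ∑' S : E, if x ∈ S.1 then wS lam σ S.1 else 0

lemma wS_nonneg {lam : ℝ} (hl : 0 ≤ lam) (σ : V → Mark) (S : Finset V) : 0 ≤ wS lam σ S := by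
  unfold wS; split
  · exact pow_nonneg hl _
  · exact le_rfl

lemma ind_nonneg {lam : ℝ} (hl : 0 ≤ lam) (σ : V → Mark) (x : V) (S : Finset V) :
    0 ≤ if x ∈ S then wS lam σ S else 0 := by
  split
  · exact wS_nonneg hl σ S
  · exact le_rfl

lemma ind_le {lam : ℝ} (hl : 0 ≤ lam) (σ : V → Mark) (x : V) (S : Finset V) :
    (if x ∈ S then wS lam σ S else 0) ≤ wS lam σ S := by
  split
  · exact le_rfl
  · exact wS_nonneg hl σ S

lemma wS_congr {lam : ℝ} {σ σ' : V → Mark} {S : Finset V} (h : ∀ v ∈ S, σ v = σ' v) :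
    wS lam σ S = wS lam σ' S := by
  unfold wS
  have h1 : (∀ v ∈ S, σ v ≠ Mark.B) ↔ (∀ v ∈ S, σ' v ≠ Mark.B) := by
    constructor <;> intro hh v hv
    · rw [← h v hv]; exact hh v hv
    · rw [h v hv]; exact hh v hv
  have h2 : S.filter (fun v => σ v = Mark.U) = S.filter (fun v => σ' v = Mark.U) :=
    Finset.filter_congr (by intro v hv; rw [h v hv])
  exact if_congr h1 (by rw [h2]) rfl

lemma claimSet_empty (σ : V → Mark) (c : Mark) : claimSet σ ∅ c = σ := by
  funext v; simp [claimSet]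

lemma claimSet_insert (σ : V → Mark) (x : V) (A : Finset V) (c : Mark) :
    claimSet σ (insert x A) c = claimSet (claimSet σ {x} c) A c := by
  funext v
  by_cases h : v ∈ A <;> by_cases h' : v = x <;> simp [claimSet, h, h']

lemma wS_claim_M {lam : ℝ} (hl0 : 0 < lam) {σ : V → Mark} {x : V} (hx : σ x = Mark.U)
    (S : Finset V) :
    wS lam (claimSet σ {x} Mark.M) S
      = wS lam σ S + (lam⁻¹ - 1) * (if x ∈ S then wS lam σ S else 0) := by
  by_cases hxS : x ∈ S
  · simp only [hxS, if_true]
    by_cases hB : ∀ v ∈ S, σ v ≠ Mark.B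
    · have hB' : ∀ v ∈ S, claimSet σ {x} Mark.M v ≠ Mark.B := by
        intro v hv
        by_cases hvx : v = x
        · simp [claimSet, hvx]
        · simpa [claimSet, hvx] using hB v hv
      have hfilter : S.filter (fun v => claimSet σ {x} Mark.M v = Mark.U)
          = (S.filter fun v => σ v = Mark.U).erase x := by
        ext v
        by_cases hvx : v = x <;>
          simp [claimSet, Finset.mem_filter, Finset.mem_erase, hvx]
      have hxf : x ∈ S.filter fun v => σ v = Mark.U := Finset.mem_filter.2 ⟨hxS, hx⟩
      have hn : 1 ≤ (S.filter fun v => σ v = Mark.U).card := Finset.card_pos.2 ⟨x, hxf⟩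
      unfold wS
      rw [if_pos hB', if_pos hB, hfilter, Finset.card_erase_of_mem hxf]
      have hne : lam ≠ 0 := ne_of_gt hl0
      have : lam ^ ((S.filter fun v => σ v = Mark.U).card - 1) * lam
          = lam ^ (S.filter fun v => σ v = Mark.U).card := by
        rw [← pow_succ, Nat.sub_add_cancel hn]
      field_simp
      linarith [this]
    · have hB' : ¬ ∀ v ∈ S, claimSet σ {x} Mark.M v ≠ Mark.B := by
        push_neg at hB ⊢
        obtain ⟨v, hv, hvB⟩ := hB
        have hvx : v ≠ x := by intro h; rw [h, hx] at hvB; exact Mark.noConfusion hvB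
        exact ⟨v, hv, by simp [claimSet, hvx, hvB]⟩
      unfold wS
      rw [if_neg hB', if_neg hB]
      ring
  · have : wS lam (claimSet σ {x} Mark.M) S = wS lam σ S := by
      refine wS_congr fun v hv => ?_
      have : v ≠ x := fun h => hxS (h ▸ hv)
      simp [claimSet, this]
    rw [this, if_neg hxS]
    ring

lemma wS_claim_B {lam : ℝ} {σ : V → Mark} (x : V) (S : Finset V) :
    wS lam (claimSet σ {x} Mark.B) S
      = wS lam σ S - (if x ∈ S then wS lam σ S else 0) := by
  by_cases hxS : x ∈ S
  · have hB' : ¬ ∀ v ∈ S, claimSet σ {x} Mark.B v ≠ Mark.B := by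
      push_neg
      exact ⟨x, hxS, by simp [claimSet]⟩
    rw [if_pos hxS]
    unfold wS
    rw [if_neg hB']
    ring
  · have : wS lam (claimSet σ {x} Mark.B) S = wS lam σ S := by
      refine wS_congr fun v hv => ?_
      have : v ≠ x := fun h => hxS (h ▸ hv)
      simp [claimSet, this]
    rw [this, if_neg hxS]
    ring

lemma wS_claimSet_B_le {lam : ℝ} (hl : 0 ≤ lam) (σ : V → Mark) (A : Finset V) (S : Finset V) :
    wS lam (claimSet σ A Mark.B) S ≤ wS lam σ S := by
  by_cases hB : ∀ v ∈ S, claimSet σ A Mark.B v ≠ Mark.B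
  · have hA : ∀ v ∈ S, v ∉ A := by
      intro v hv hvA
      exact hB v hv (by simp [claimSet, hvA])
    have : wS lam (claimSet σ A Mark.B) S = wS lam σ S := by
      refine wS_congr fun v hv => by simp [claimSet, hA v hv]
    exact le_of_eq this
  · unfold wS
    rw [if_neg hB]
    exact wS_nonneg hl σ S


section Tsum

variable (lam : ℝ) (E : Set (Finset V))

lemma summable_ind {lam : ℝ} (hl : 0 ≤ lam) (E : Set (Finset V)) {σ : V → Mark}
    (hσ : Summable fun S : E => wS lam σ S.1) (x : V) :
    Summable fun S : E => if x ∈ S.1 then wS lam σ S.1 else 0 :=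
  hσ.of_nonneg_of_le (fun S => ind_nonneg hl σ x S.1) (fun S => ind_le hl σ x S.1)

lemma Dv_nonneg {lam : ℝ} (hl : 0 ≤ lam) (E : Set (Finset V)) (σ : V → Mark) (x : V) :
    0 ≤ Dv lam E σ x :=
  tsum_nonneg fun S => ind_nonneg hl σ x S.1

lemma totalW_nonneg {lam : ℝ} (hl : 0 ≤ lam) (E : Set (Finset V)) (σ : V → Mark) :
    0 ≤ totalW lam E σ :=
  tsum_nonneg fun S => wS_nonneg hl σ S.1

lemma Dv_le_totalW {lam : ℝ} (hl : 0 ≤ lam) (E : Set (Finset V)) {σ : V → Mark}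
    (hσ : Summable fun S : E => wS lam σ S.1) (x : V) :
    Dv lam E σ x ≤ totalW lam E σ :=
  Summable.tsum_le_tsum (fun S => ind_le hl σ x S.1) (summable_ind hl E hσ x) hσ

lemma claim_M_spec {lam : ℝ} (hl0 : 0 < lam) (E : Set (Finset V)) {σ : V → Mark} {x : V}
    (hx : σ x = Mark.U) (hσ : Summable fun S : E => wS lam σ S.1) :
    Summable (fun S : E => wS lam (claimSet σ {x} Mark.M) S.1) ∧
    totalW lam E (claimSet σ {x} Mark.M) = totalW lam E σ + (lam⁻¹ - 1) * Dv lam E σ x := by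
  have hpt : ∀ S : E, wS lam (claimSet σ {x} Mark.M) S.1
      = wS lam σ S.1 + (lam⁻¹ - 1) * (if x ∈ S.1 then wS lam σ S.1 else 0) :=
    fun S => wS_claim_M hl0 hx S.1
  have hs2 : Summable fun S : E => (lam⁻¹ - 1) * (if x ∈ S.1 then wS lam σ S.1 else 0) :=
    (summable_ind hl0.le E hσ x).mul_left _
  refine ⟨(hσ.add hs2).congr (fun S => (hpt S).symm), ?_⟩
  unfold totalW Dv
  rw [tsum_congr hpt, Summable.tsum_add hσ hs2, tsum_mul_left]

lemma claim_B_spec {lam : ℝ} (hl0 : 0 < lam) (E : Set (Finset V)) {σ : V → Mark} (x : V)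
    (hσ : Summable fun S : E => wS lam σ S.1) :
    Summable (fun S : E => wS lam (claimSet σ {x} Mark.B) S.1) ∧
    totalW lam E (claimSet σ {x} Mark.B) = totalW lam E σ - Dv lam E σ x := by
  have hpt : ∀ S : E, wS lam (claimSet σ {x} Mark.B) S.1
      = wS lam σ S.1 - (if x ∈ S.1 then wS lam σ S.1 else 0) :=
    fun S => wS_claim_B x S.1
  have hs2 : Summable fun S : E => (if x ∈ S.1 then wS lam σ S.1 else 0) :=
    summable_ind hl0.le E hσ x
  refine ⟨(hσ.sub hs2).congr (fun S => (hpt S).symm), ?_⟩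
  unfold totalW Dv
  rw [tsum_congr hpt, Summable.tsum_sub hσ hs2]

lemma summable_claimSet_B {lam : ℝ} (hl : 0 ≤ lam) (E : Set (Finset V)) {σ : V → Mark}
    (hσ : Summable fun S : E => wS lam σ S.1) (A : Finset V) :
    Summable fun S : E => wS lam (claimSet σ A Mark.B) S.1 :=
  hσ.of_nonneg_of_le (fun S => wS_nonneg hl _ S.1) (fun S => wS_claimSet_B_le hl σ A S.1)

lemma Dv_claimSet_B_le {lam : ℝ} (hl : 0 ≤ lam) (E : Set (Finset V)) {σ : V → Mark}
    (hσ : Summable fun S : E => wS lam σ S.1) (A : Finset V) (v : V) :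
    Dv lam E (claimSet σ A Mark.B) v ≤ Dv lam E σ v := by
  refine Summable.tsum_le_tsum (fun S => ?_) (summable_ind hl E (summable_claimSet_B hl E hσ A) v)
    (summable_ind hl E hσ v)
  split
  · exact wS_claimSet_B_le hl σ A S.1
  · exact le_rfl

lemma wS_claim_M_le {lam : ℝ} (hl0 : 0 < lam) (hl1 : lam ≤ 1) {σ : V → Mark} {x : V}
    (hx : σ x = Mark.U) (S : Finset V) :
    wS lam (claimSet σ {x} Mark.M) S ≤ lam⁻¹ * wS lam σ S := by
  rw [wS_claim_M hl0 hx S]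
  have h1 : (1:ℝ) ≤ lam⁻¹ := one_le_inv₀ hl0 |>.2 hl1
  nlinarith [ind_le hl0.le σ x S, wS_nonneg hl0.le σ S, ind_nonneg hl0.le σ x S]

lemma Dv_claim_M_le {lam : ℝ} (hl0 : 0 < lam) (hl1 : lam ≤ 1) (E : Set (Finset V))
    {σ : V → Mark} {x : V} (hx : σ x = Mark.U)
    (hσ : Summable fun S : E => wS lam σ S.1) (v : V) :
    Dv lam E (claimSet σ {x} Mark.M) v ≤ lam⁻¹ * Dv lam E σ v := by
  have hσ' := (claim_M_spec hl0 E hx hσ).1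
  unfold Dv
  rw [← tsum_mul_left]
  refine Summable.tsum_le_tsum (fun S => ?_) (summable_ind hl0.le E hσ' v)
    (((summable_ind hl0.le E hσ v)).mul_left _)
  by_cases h : v ∈ S.1
  · simp only [h, if_true]
    exact wS_claim_M_le hl0 hl1 hx S.1
  · simp only [h, if_false, mul_zero, le_refl]

end Tsum


lemma maker_step {lam : ℝ} (hl0 : 0 < lam) (hl1 : lam ≤ 1) (E : Set (Finset V)) :
    ∀ (A : Finset V) (σ : V → Mark) (D : ℝ), (Summable fun S : E => wS lam σ S.1) →
    (↑A ⊆ {v | σ v = Mark.U}) → 0 ≤ D → (∀ v, σ v = Mark.U → Dv lam E σ v ≤ D) →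
    (Summable fun S : E => wS lam (claimSet σ A Mark.M) S.1) ∧
    totalW lam E (claimSet σ A Mark.M) ≤ totalW lam E σ + ((lam⁻¹) ^ A.card - 1) * D := by
  intro A
  induction A using Finset.induction_on with
  | empty =>
    intro σ D hσ _ hD _
    rw [claimSet_empty]
    exact ⟨hσ, by simp⟩
  | @insert x A hxA ih =>
    intro σ D hσ hA hD hDv
    have hxU : σ x = Mark.U := hA (Finset.mem_insert_self x A)
    rw [claimSet_insert]
    set σ₁ := claimSet σ {x} Mark.M with hσ₁def
    obtain ⟨hσ₁, heq⟩ := claim_M_spec hl0 E hxU hσ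
    have hinv : (1:ℝ) ≤ lam⁻¹ := (one_le_inv₀ hl0).2 hl1
    have hA₁ : ↑A ⊆ {v | σ₁ v = Mark.U} := by
      intro v hv
      have hvU : σ v = Mark.U := hA (Finset.mem_insert_of_mem hv)
      have hvx : v ≠ x := fun h => hxA (h ▸ hv)
      show σ₁ v = Mark.U
      simp [hσ₁def, claimSet, hvx, hvU]
    have hDv₁ : ∀ v, σ₁ v = Mark.U → Dv lam E σ₁ v ≤ lam⁻¹ * D := by
      intro v hv
      have hvU : σ v = Mark.U := by
        by_cases hvx : v = x
        · exfalso; rw [hσ₁def] at hv; simp [claimSet, hvx] at hv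
        · rw [hσ₁def] at hv; simpa [claimSet, hvx] using hv
      calc Dv lam E σ₁ v ≤ lam⁻¹ * Dv lam E σ v := Dv_claim_M_le hl0 hl1 E hxU hσ v
        _ ≤ lam⁻¹ * D := by
            have := hDv v hvU
            nlinarith
    obtain ⟨hs, hle⟩ := ih σ₁ (lam⁻¹ * D) hσ₁ hA₁ (by positivity) hDv₁
    refine ⟨hs, ?_⟩
    have hx1 : Dv lam E σ x ≤ D := hDv x hxU
    have h1 : totalW lam E σ₁ ≤ totalW lam E σ + (lam⁻¹ - 1) * D := by
      rw [heq]
      nlinarith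
    rw [Finset.card_insert_of_notMem hxA]
    calc totalW lam E (claimSet σ₁ A Mark.M)
        ≤ totalW lam E σ₁ + ((lam⁻¹) ^ A.card - 1) * (lam⁻¹ * D) := hle
      _ ≤ totalW lam E σ + (lam⁻¹ - 1) * D + ((lam⁻¹) ^ A.card - 1) * (lam⁻¹ * D) := by linarith
      _ = totalW lam E σ + ((lam⁻¹) ^ (A.card + 1) - 1) * D := by ring

lemma exists_eps_max {lam : ℝ} (hl0 : 0 < lam) (E : Set (Finset V)) {σ : V → Mark}
    (hσ : Summable fun S : E => wS lam σ S.1) {ε : ℝ} (hε : 0 < ε)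
    (hne : ∃ v, σ v = Mark.U) :
    ∃ v, σ v = Mark.U ∧ ∀ u, σ u = Mark.U → Dv lam E σ u ≤ Dv lam E σ v + ε := by
  set T := Dv lam E σ '' {v | σ v = Mark.U} with hT
  obtain ⟨v₀, hv₀⟩ := hne
  have hTne : T.Nonempty := ⟨_, ⟨v₀, hv₀, rfl⟩⟩
  have hbdd : BddAbove T := by
    refine ⟨totalW lam E σ, ?_⟩
    rintro t ⟨v, hv, rfl⟩
    exact Dv_le_totalW hl0.le E hσ v
  obtain ⟨t, ht, htlt⟩ := exists_lt_of_lt_csSup hTne (show sSup T - ε < sSup T by linarith)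
  obtain ⟨v, hv, rfl⟩ := ht
  refine ⟨v, hv, fun u hu => ?_⟩
  have := le_csSup hbdd (⟨u, hu, rfl⟩ : Dv lam E σ u ∈ T)
  linarith

lemma breaker_step {lam : ℝ} (hl0 : 0 < lam) (E : Set (Finset V)) (ε : ℝ) (hε : 0 < ε) :
    ∀ (j : ℕ) (σ : V → Mark), (Summable fun S : E => wS lam σ S.1) →
    ∃ (A : Finset V) (D : ℝ), A.card ≤ j ∧ (↑A ⊆ {v | σ v = Mark.U}) ∧
      (Summable fun S : E => wS lam (claimSet σ A Mark.B) S.1) ∧ 0 ≤ D ∧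
      (∀ v, claimSet σ A Mark.B v = Mark.U → Dv lam E (claimSet σ A Mark.B) v ≤ D) ∧
      (D ≤ 2*ε ∨ ∃ v, claimSet σ A Mark.B v = Mark.U ∧
        D ≤ Dv lam E (claimSet σ A Mark.B) v + 2*ε) ∧
      totalW lam E (claimSet σ A Mark.B) + j * D ≤ totalW lam E σ + j * (3*ε) := by
  intro j
  induction j with
  | zero =>
    intro σ hσ
    by_cases hne : ∃ v, σ v = Mark.U
    · obtain ⟨v, hv, hmax⟩ := exists_eps_max hl0 E hσ hε hne
      refine ⟨∅, Dv lam E σ v + ε, le_rfl, by simp, ?_, ?_, ?_, ?_, ?_⟩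
      · rw [claimSet_empty]; exact hσ
      · have := Dv_nonneg hl0.le E σ v; linarith
      · rw [claimSet_empty]; exact fun u hu => hmax u hu
      · right
        exact ⟨v, by rw [claimSet_empty]; exact hv, by rw [claimSet_empty]; linarith⟩
      · rw [claimSet_empty]; simp
    · refine ⟨∅, 0, le_rfl, by simp, ?_, le_rfl, ?_, Or.inl (by linarith), ?_⟩
      · rw [claimSet_empty]; exact hσ
      · rw [claimSet_empty]; exact fun u hu => absurd ⟨u, hu⟩ hne
      · rw [claimSet_empty]; simp
  | succ j ih =>
    intro σ hσ
    by_cases hne : ∃ v, σ v = Mark.U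
    · obtain ⟨v, hv, hmax⟩ := exists_eps_max hl0 E hσ hε hne
      set σ₁ := claimSet σ {v} Mark.B with hσ₁def
      obtain ⟨hσ₁, heq⟩ := claim_B_spec hl0 E v hσ
      obtain ⟨A₁, D₁, hcard, hsub, hsum', hD₁0, hbound, hK, hineq⟩ := ih σ₁ hσ₁
      have hvA₁ : v ∉ A₁ := by
        intro h
        have := hsub h
        simp only [Set.mem_setOf_eq, hσ₁def, claimSet] at this
        simp at this
      have hset : claimSet σ (insert v A₁) Mark.B = claimSet σ₁ A₁ Mark.B := by
        rw [hσ₁def, ← claimSet_insert]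
      have hDvv : 0 ≤ Dv lam E σ v := Dv_nonneg hl0.le E σ v
      -- key: D₁ ≤ Dv σ v + 3ε
      have hkey : D₁ ≤ Dv lam E σ v + 3*ε := by
        rcases hK with h | ⟨u, hu, hDu⟩
        · linarith
        · have huσ₁ : σ₁ u = Mark.U := by
            by_cases huA : u ∈ A₁
            · exfalso; simp [claimSet, huA] at hu
            · simpa [claimSet, huA] using hu
          have huσ : σ u = Mark.U := by
            by_cases huv : u = v
            · exfalso; rw [hσ₁def] at huσ₁; simp [claimSet, huv] at huσ₁
            · rw [hσ₁def] at huσ₁; simpa [claimSet, huv] using huσ₁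
          have h1 : Dv lam E (claimSet σ₁ A₁ Mark.B) u ≤ Dv lam E σ₁ u :=
            Dv_claimSet_B_le hl0.le E hσ₁ A₁ u
          have h2 : Dv lam E σ₁ u ≤ Dv lam E σ u := by
            rw [hσ₁def]
            exact Dv_claimSet_B_le hl0.le E hσ {v} u
          have h3 : Dv lam E σ u ≤ Dv lam E σ v + ε := hmax u huσ
          linarith
      refine ⟨insert v A₁, D₁, ?_, ?_, ?_, hD₁0, ?_, ?_, ?_⟩
      · rw [Finset.card_insert_of_notMem hvA₁]; omega
      · intro u hu
        rcases Finset.mem_insert.1 (by exact_mod_cast hu) with h | h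
        · exact h ▸ hv
        · have := hsub h
          simp only [Set.mem_setOf_eq, hσ₁def, claimSet] at this
          by_cases huv : u = v <;> simp_all [claimSet]
      · rw [hset]; exact hsum'
      · rw [hset]; exact hbound
      · rw [hset]; exact hK
      · rw [hset, heq] at *
        push_cast

        nlinarith
    · refine ⟨∅, 0, by simp, by simp, ?_, le_rfl, ?_, Or.inl (by linarith), ?_⟩
      · rw [claimSet_empty]; exact hσ
      · rw [claimSet_empty]; exact fun u hu => absurd ⟨u, hu⟩ hne
      · rw [claimSet_empty]
        have : (0:ℝ) ≤ (j+1 : ℕ) * (3*ε) := by positivity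
        push_cast at this ⊢
        linarith

noncomputable def breakerMove (lam : ℝ) (hl0 : 0 < lam) (E : Set (Finset V)) (b : ℕ)
    (hb : 1 ≤ b) (τ : V → Mark) : Finset V :=
  if h : (Summable fun S : E => wS lam τ S.1) ∧ totalW lam E τ < 1 then
    (breaker_step hl0 E ((1 - totalW lam E τ)/(6*b))
      (div_pos (by linarith [h.2])
        (by have : (1:ℝ) ≤ (b:ℕ) := by exact_mod_cast hb
            linarith)) b τ h.1).choose
  else ∅

lemma breakerMove_sub (lam : ℝ) (hl0 : 0 < lam) (E : Set (Finset V)) (b : ℕ)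
    (hb : 1 ≤ b) (τ : V → Mark) :
    ↑(breakerMove lam hl0 E b hb τ) ⊆ {v | τ v = Mark.U} := by
  unfold breakerMove
  split
  · next h =>
    exact (breaker_step hl0 E ((1 - totalW lam E τ)/(6*b))
      (div_pos (by linarith [h.2])
        (by have : (1:ℝ) ≤ (b:ℕ) := by exact_mod_cast hb
            linarith)) b τ h.1).choose_spec.choose_spec.2.1
  · simp

lemma breakerMove_card (lam : ℝ) (hl0 : 0 < lam) (E : Set (Finset V)) (b : ℕ)
    (hb : 1 ≤ b) (τ : V → Mark) :
    (breakerMove lam hl0 E b hb τ).card ≤ b := by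
  unfold breakerMove
  split
  · next h =>
    exact (breaker_step hl0 E ((1 - totalW lam E τ)/(6*b))
      (div_pos (by linarith [h.2])
        (by have : (1:ℝ) ≤ (b:ℕ) := by exact_mod_cast hb
            linarith)) b τ h.1).choose_spec.choose_spec.1
  · simp

lemma breakerMove_spec (lam : ℝ) (hl0 : 0 < lam) (E : Set (Finset V)) (b : ℕ)
    (hb : 1 ≤ b) {τ : V → Mark}
    (h : (Summable fun S : E => wS lam τ S.1) ∧ totalW lam E τ < 1) :
    ∃ D, 0 ≤ D ∧
      (Summable fun S : E =>
        wS lam (claimSet τ (breakerMove lam hl0 E b hb τ) Mark.B) S.1) ∧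
      (∀ v, claimSet τ (breakerMove lam hl0 E b hb τ) Mark.B v = Mark.U →
        Dv lam E (claimSet τ (breakerMove lam hl0 E b hb τ) Mark.B) v ≤ D) ∧
      totalW lam E (claimSet τ (breakerMove lam hl0 E b hb τ) Mark.B) + b * D < 1 := by
  have hbR : (1:ℝ) ≤ (b:ℕ) := by exact_mod_cast hb
  rw [breakerMove, dif_pos h]
  obtain ⟨D, hcard, hsub, hsum', hD0, hbound, hK, hineq⟩ :=
    (breaker_step hl0 E ((1 - totalW lam E τ)/(6*b))
      (div_pos (by linarith [h.2])
        (by linarith)) b τ h.1).choose_spec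
  refine ⟨D, hD0, hsum', hbound, ?_⟩
  have hb0 : (b:ℝ) ≠ 0 := by linarith
  have harith : (b:ℝ) * (3 * ((1 - totalW lam E τ)/(6*b))) = (1 - totalW lam E τ)/2 := by
    field_simp
    ring
  linarith [h.2, hineq, harith]

end Beck

/-- Beck's criterion for infinite hypergraphs: if the total danger of the initial
configuration `σ0` at `λ = (b+1)^{−1/m}` is less than `1/(b+1)`, then Breaker has a
strategy for the `(m,b)` Maker-Breaker game on the hypergraph with (finite) hyperedges
`E` starting from `σ0` which guarantees that Maker never fully claims a hyperedge. -/
theorem stmt_16 {V : Type*} (m b : ℕ) (hm : 1 ≤ m) (hb : 1 ≤ b)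
    (E : Set (Finset V)) (σ0 : V → Mark)
    (hsum : Summable fun S : E => wS (((b : ℝ) + 1) ^ (-(1 : ℝ) / m)) σ0 S.1)
    (hdanger : totalW (((b : ℝ) + 1) ^ (-(1 : ℝ) / m)) E σ0 < 1 / ((b : ℝ) + 1)) :
    ∃ str : BStrategy V b, ∀ (σ : ℕ → V → Mark) (A : ℕ → Finset V),
      IsPlay (fun _ => m) b str σ0 σ A →
      ∀ k : ℕ, ∀ S ∈ E, ¬ ∀ v ∈ S, claimSet (σ k) (A k) Mark.M v = Mark.M := by
  set lam : ℝ := ((b : ℝ) + 1) ^ (-(1 : ℝ) / m) with hlam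
  have hb1 : (0:ℝ) < (b:ℝ) + 1 := by positivity
  have hl0 : 0 < lam := Real.rpow_pos_of_pos hb1 _
  have hl1 : lam ≤ 1 :=
    Real.rpow_le_one_of_one_le_of_nonpos (by linarith [Nat.cast_nonneg (α := ℝ) b])
      (by apply div_nonpos_of_nonpos_of_nonneg <;> [norm_num; positivity])
  have hm0 : (m:ℝ) ≠ 0 := Nat.cast_ne_zero.2 (by omega)
  have hinv : lam⁻¹ = ((b:ℝ)+1) ^ ((1:ℝ)/(m:ℝ)) := by
    have h : lam = (((b:ℝ)+1) ^ ((1:ℝ)/(m:ℝ)))⁻¹ := by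
      rw [hlam, ← Real.rpow_neg hb1.le]
      congr 1
      ring
    rw [h, inv_inv]
  have hpow : lam⁻¹ ^ m = (b:ℝ) + 1 := by
    rw [hinv, ← Real.rpow_natCast (((b:ℝ)+1) ^ ((1:ℝ)/(m:ℝ))) m, ← Real.rpow_mul hb1.le,
      one_div_mul_cancel hm0, Real.rpow_one]
  have hinv1 : (1:ℝ) ≤ lam⁻¹ := (one_le_inv₀ hl0).2 hl1
  refine ⟨⟨fun τ => Beck.breakerMove lam hl0 E b hb τ,
    fun τ => Beck.breakerMove_sub lam hl0 E b hb τ,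
    fun τ => Beck.breakerMove_card lam hl0 E b hb τ⟩, ?_⟩
  intro σ A hplay
  obtain ⟨h0, hA, hAcard, hstep⟩ := hplay
  -- one Maker move keeps the weight below 1
  have mstep : ∀ k, (Summable fun S : E => wS lam (σ k) S.1) →
      ∀ D, 0 ≤ D → (∀ v, σ k v = Mark.U → Beck.Dv lam E (σ k) v ≤ D) →
      totalW lam E (σ k) + (b:ℝ) * D < 1 →
      (Summable fun S : E => wS lam (claimSet (σ k) (A k) Mark.M) S.1) ∧
      totalW lam E (claimSet (σ k) (A k) Mark.M) < 1 := by
    intro k hsk D hD0 hDv hwlt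
    obtain ⟨hsumτ, hwτle⟩ := Beck.maker_step hl0 hl1 E (A k) (σ k) D hsk (hA k) hD0 hDv
    refine ⟨hsumτ, ?_⟩
    have hpowle : lam⁻¹ ^ (A k).card ≤ lam⁻¹ ^ m := pow_le_pow_right₀ hinv1 (hAcard k)
    have h1 : (lam⁻¹ ^ (A k).card - 1) * D ≤ (b:ℝ) * D := by nlinarith [hpow]
    linarith
  -- the round invariant
  have key : ∀ k, (Summable fun S : E => wS lam (σ k) S.1) ∧
      ∃ D, 0 ≤ D ∧ (∀ v, σ k v = Mark.U → Beck.Dv lam E (σ k) v ≤ D) ∧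
        totalW lam E (σ k) + (b:ℝ) * D < 1 := by
    intro k
    induction k with
    | zero =>
      rw [h0]
      refine ⟨hsum, totalW lam E σ0, Beck.totalW_nonneg hl0.le E σ0,
        fun v _ => Beck.Dv_le_totalW hl0.le E hsum v, ?_⟩
      have h2 : ((b:ℝ)+1) * totalW lam E σ0 < ((b:ℝ)+1) * (1/((b:ℝ)+1)) :=
        mul_lt_mul_of_pos_left hdanger hb1
      have h3 : ((b:ℝ)+1) * (1/((b:ℝ)+1)) = 1 := by field_simp
      nlinarith
    | succ k ih =>
      obtain ⟨hsk, D, hD0, hDv, hwlt⟩ := ih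
      obtain ⟨hsumτ, hwτ⟩ := mstep k hsk D hD0 hDv hwlt
      obtain ⟨D', hD'0, hsum', hbound, hlt⟩ :=
        Beck.breakerMove_spec lam hl0 E b hb ⟨hsumτ, hwτ⟩
      rw [hstep k]
      exact ⟨hsum', D', hD'0, hbound, hlt⟩
  -- conclusion
  intro k S hS hall
  obtain ⟨hsk, D, hD0, hDv, hwlt⟩ := key k
  obtain ⟨hsumτ, hwτ⟩ := mstep k hsk D hD0 hDv hwlt
  have h1 : wS lam (claimSet (σ k) (A k) Mark.M) S = 1 := by
    unfold wS
    rw [if_pos]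
    · have hfe : (S.filter fun v => claimSet (σ k) (A k) Mark.M v = Mark.U) = ∅ := by
        refine Finset.filter_eq_empty_iff.2 fun v hv => ?_
        rw [hall v hv]
        exact fun h => Mark.noConfusion h
      rw [hfe]
      simp
    · intro v hv
      rw [hall v hv]
      exact fun h => Mark.noConfusion h
  have h2 : wS lam (claimSet (σ k) (A k) Mark.M) S
      ≤ totalW lam E (claimSet (σ k) (A k) Mark.M) := by
    have := Summable.le_tsum hsumτ (⟨S, hS⟩ : E) (fun j _ => Beck.wS_nonneg hl0.le _ _)
    exact this
  rw [h1] at h2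
  linarith
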